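/- Let u : ℝ → ℝ be twice continuously differentiable with u' > 0 and u'' < 0, let ħ : [0,1] → ℝ be nonnegative, λ > 0, φ : [0,1] → ℝ continuous. Suppose δ ∈ C²[0,1] is concave, δ' takes values in the range of u', and min{ δ''(p) − ħ(p)·u''((u')⁻¹(δ'(p))), λφ(p) − δ(p) } = 0 a.e. on [0,1]. Define Q̄(p) := (u')⁻¹(δ'(p)). Then the complementary-slackness identity (Q̄'(p) − ħ(p))·(λφ(p) − δ(p)) = 0 holds for a.e. p ∈ [0,1], and consequently ∫₀¹ λ (Q̄'(p) − ħ(p)) φ(p) dp = ∫₀¹ (Q̄'(p) − ħ(p)) δ(p) dp. -/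

import Mathlib

open MeasureTheory Set

/-- Derivative of `Function.invFun (deriv u)` on the range of `deriv u`. -/
lemma invFun_deriv_hasDerivAt (u : ℝ → ℝ) (hu : ContDiff ℝ 2 u)
    (hu'' : ∀ x, deriv (deriv u) x < 0)
    {y : ℝ} (hy : y ∈ Set.range (deriv u)) :
    HasDerivAt (Function.invFun (deriv u))
      (deriv (deriv u) (Function.invFun (deriv u) y))⁻¹ y := by
  obtain ⟨x, rfl⟩ := hy
  have hf1 : ContDiff ℝ 1 (deriv u) :=
    (contDiff_succ_iff_deriv.mp (by exact_mod_cast hu : ContDiff ℝ (1+1) u)).2.2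
  have hanti : StrictAnti (deriv u) := strictAnti_of_deriv_neg hu''
  have hinj : Function.Injective (deriv u) := hanti.injective
  have hli : ∀ z, Function.invFun (deriv u) (deriv u z) = z :=
    Function.leftInverse_invFun hinj
  have hsd : HasStrictDerivAt (deriv u) (deriv (deriv u) x) x :=
    hf1.hasStrictDerivAt one_ne_zero
  have := hsd.to_local_left_inverse (g := Function.invFun (deriv u))
    (hu'' x).ne (Filter.Eventually.of_forall hli)
  rw [hli x]
  exact this.hasDerivAt

/-- **Complementary slackness**: for the candidate optimizer `Q̄ := (u')⁻¹ ∘ δ'` built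
from a concave `C²` solution `δ` of the free boundary problem, the identity
`(Q̄' - hbar)(λφ - δ) = 0` holds a.e. on `[0,1]`, and consequently
`∫₀¹ λ(Q̄' - hbar)φ = ∫₀¹ (Q̄' - hbar)δ`. -/
theorem fbp_complementary_slackness
    (u : ℝ → ℝ) (hu : ContDiff ℝ 2 u)
    (hu' : ∀ x, 0 < deriv u x) (hu'' : ∀ x, deriv (deriv u) x < 0)
    (hbar : ℝ → ℝ) (hbar0 : ∀ p ∈ Set.Icc (0 : ℝ) 1, 0 ≤ hbar p)
    (lam : ℝ) (hlam : 0 < lam)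
    (φ : ℝ → ℝ) (hφc : ContinuousOn φ (Set.Icc 0 1))
    (δ : ℝ → ℝ) (hδC2 : ContDiffOn ℝ 2 δ (Set.Icc 0 1))
    (hδconc : ConcaveOn ℝ (Set.Icc 0 1) δ)
    (hrange : ∀ p ∈ Set.Icc (0 : ℝ) 1,
      derivWithin δ (Set.Icc 0 1) p ∈ Set.range (deriv u))
    (hFBP : ∀ᵐ p ∂(MeasureTheory.volume.restrict (Set.Icc (0 : ℝ) 1)),
      min (derivWithin (derivWithin δ (Set.Icc 0 1)) (Set.Icc 0 1) p -
            hbar p * deriv (deriv u)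
              (Function.invFun (deriv u) (derivWithin δ (Set.Icc 0 1) p)))
          (lam * φ p - δ p) = 0) :
    (∀ᵐ p ∂(MeasureTheory.volume.restrict (Set.Icc (0 : ℝ) 1)),
      (derivWithin (fun q => Function.invFun (deriv u) (derivWithin δ (Set.Icc 0 1) q))
          (Set.Icc 0 1) p - hbar p) * (lam * φ p - δ p) = 0) ∧
    (∫ p in Set.Icc (0 : ℝ) 1,
        lam * (derivWithin (fun q => Function.invFun (deriv u) (derivWithin δ (Set.Icc 0 1) q))
          (Set.Icc 0 1) p - hbar p) * φ p) =
      ∫ p in Set.Icc (0 : ℝ) 1,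
        (derivWithin (fun q => Function.invFun (deriv u) (derivWithin δ (Set.Icc 0 1) q))
          (Set.Icc 0 1) p - hbar p) * δ p := by
  set s : Set ℝ := Set.Icc 0 1 with hs_def
  have hsU : UniqueDiffOn ℝ s := uniqueDiffOn_Icc one_pos
  set δ₁ : ℝ → ℝ := derivWithin δ s with hδ1_def
  have hδ1C1 : ContDiffOn ℝ 1 δ₁ s := hδC2.derivWithin hsU (by norm_num)
  have hδ1D : DifferentiableOn ℝ δ₁ s := hδ1C1.differentiableOn one_ne_zero
  -- chain rule for Q̄
  have hQ' : ∀ p ∈ s,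
      derivWithin (fun q => Function.invFun (deriv u) (δ₁ q)) s p =
        (deriv (deriv u) (Function.invFun (deriv u) (δ₁ p)))⁻¹ * derivWithin δ₁ s p := by
    intro p hp
    have hd : HasDerivWithinAt δ₁ (derivWithin δ₁ s p) s p :=
      (hδ1D p hp).hasDerivWithinAt
    have hg : HasDerivAt (Function.invFun (deriv u))
        (deriv (deriv u) (Function.invFun (deriv u) (δ₁ p)))⁻¹ (δ₁ p) :=
      invFun_deriv_hasDerivAt u hu hu'' (hrange p hp)
    exact (hg.comp_hasDerivWithinAt p hd).derivWithin (hsU p hp)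
  -- a.e. complementary slackness
  have hae : ∀ᵐ p ∂(MeasureTheory.volume.restrict s),
      (derivWithin (fun q => Function.invFun (deriv u) (δ₁ q)) s p - hbar p) *
        (lam * φ p - δ p) = 0 := by
    filter_upwards [hFBP, ae_restrict_mem measurableSet_Icc] with p hmin hp
    have hne : deriv (deriv u) (Function.invFun (deriv u) (δ₁ p)) ≠ 0 :=
      (hu'' _).ne
    rw [hQ' p hp]
    rcases min_eq_iff.mp hmin with ⟨hA, _⟩ | ⟨hB, _⟩
    · have h2 : derivWithin δ₁ s p =
          hbar p * deriv (deriv u) (Function.invFun (deriv u) (δ₁ p)) := by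
        linarith
      rw [h2]
      field_simp
      simp
    · rw [hB, mul_zero]
  refine ⟨hae, ?_⟩
  apply integral_congr_ae
  filter_upwards [hae] with p hp0
  linear_combination hp0
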